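/- In the high-evidence limit of the exponential-activation evidential model, as all e_k → ∞ proportionally to exp(o_k), the gradient (1/S − y_k/α_k)(α_k − 1) converges to sm_k(o) − y_k, the standard softmax cross-entropy gradient. Precisely: for fixed logits o and scale t → ∞ with α_k = t·exp(o_k) + 1, the gradient tends to exp(o_k)/∑_j exp(o_j) − y_k. -/

import Mathlib

/-- High-evidence limit of the exponential-activation evidential model:
with `α k (t) = t * exp (o k) + 1` and `S t = ∑ j, α j (t)`, the gradient
`(1/S t - y k / α k t) * (α k t - 1)` tends, as `t → ∞`, to the standard
softmax cross-entropy gradient `exp (o k) / ∑ j, exp (o j) - y k`. -/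
theorem typeII_exp_gradient_high_evidence_limit {K : ℕ} (hK : 1 ≤ K)
    (o y : Fin K → ℝ) (hy01 : ∀ j, y j = 0 ∨ y j = 1) (hy1 : ∑ j, y j = 1)
    (k : Fin K) :
    Filter.Tendsto
      (fun t : ℝ =>
        (1 / (∑ j, (t * Real.exp (o j) + 1)) -
            y k / (t * Real.exp (o k) + 1)) * ((t * Real.exp (o k) + 1) - 1))
      Filter.atTop
      (nhds (Real.exp (o k) / (∑ j, Real.exp (o j)) - y k)) := by
  set E : ℝ := ∑ j, Real.exp (o j) with hE
  have hEpos : 0 < E := Finset.sum_pos (fun j _ => Real.exp_pos _)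
    ⟨⟨0, hK⟩, Finset.mem_univ _⟩
  have hek : 0 < Real.exp (o k) := Real.exp_pos _
  have hinv : Filter.Tendsto (fun t : ℝ => t⁻¹) Filter.atTop (nhds 0) :=
    tendsto_inv_atTop_zero
  have hd1 : Filter.Tendsto (fun t : ℝ => E + (K : ℝ) * t⁻¹) Filter.atTop
      (nhds (E + (K : ℝ) * 0)) := tendsto_const_nhds.add (hinv.const_mul _)
  have hd2 : Filter.Tendsto (fun t : ℝ => Real.exp (o k) + t⁻¹) Filter.atTop
      (nhds (Real.exp (o k) + 0)) := tendsto_const_nhds.add hinv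
  have h1 : Filter.Tendsto (fun t : ℝ => Real.exp (o k) / (E + (K : ℝ) * t⁻¹))
      Filter.atTop (nhds (Real.exp (o k) / E)) := by
    have := (tendsto_const_nhds (x := Real.exp (o k))).div hd1
      (by simp only [mul_zero, add_zero]; exact hEpos.ne')
    simpa [Pi.div_def] using this
  have h2 : Filter.Tendsto (fun t : ℝ => y k * (Real.exp (o k) / (Real.exp (o k) + t⁻¹)))
      Filter.atTop (nhds (y k)) := by
    have := ((tendsto_const_nhds (x := Real.exp (o k))).div hd2
      (by simp only [add_zero]; exact hek.ne')).const_mul (y k)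
    simpa [div_self hek.ne'] using this
  have hlim := h1.sub h2
  refine hlim.congr' ?_
  filter_upwards [Filter.eventually_gt_atTop (0 : ℝ)] with t ht
  have hsum : (∑ j, (t * Real.exp (o j) + 1)) = t * E + K := by
    rw [Finset.sum_add_distrib, ← Finset.mul_sum]; simp [hE]
  rw [hsum]
  have ht0 : t ≠ 0 := ne_of_gt ht
  have hA : t * E + K ≠ 0 := by
    have : 0 < t * E := mul_pos ht hEpos
    have : (0:ℝ) ≤ (K:ℝ) := Nat.cast_nonneg _
    positivity
  have hB : t * Real.exp (o k) + 1 ≠ 0 := by positivity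
  have hC : E + (K : ℝ) * t⁻¹ ≠ 0 := by positivity
  have hD : Real.exp (o k) + t⁻¹ ≠ 0 := by positivity
  field_simp
  ring
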